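/- Let Q be the presented group ⟨x₁, x₂, x₃, x₄ | x₁²x₂²x₃²x₄²⟩ (the fundamental group of the connected sum M² = K # K of two Klein bottles), let G = Q × ℤ (the fundamental group of M³ = M² × S¹), let w : G → ℤ/2ℤ be the group homomorphism determined by w(xᵢ, 0) = 1 for i = 1,…,4 and w(1, n) = 0 for all n ∈ ℤ (the orientation character of M³), and set α = (x₁, 0) and β = (x₃, 0) (the classes of the two loops, each lying in its own Klein bottle summand and reversing its orientation). Then there exists no element λ ∈ G such that w(λ) ≠ 0 and conjugation by λ either fixes both α and β (i.e. λ⁻¹αλ = α and λ⁻¹βλ = β) or swaps them (i.e. λ⁻¹αλ = β and λ⁻¹βλ = α). -/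

import Mathlib

open Multiplicative

/-- The single relator `x₁²x₂²x₃²x₄²` of the genus-4 non-orientable surface group. -/
def kleinRels : Set (FreeGroup (Fin 4)) :=
  {(FreeGroup.of 0) ^ 2 * (FreeGroup.of 1) ^ 2 * (FreeGroup.of 2) ^ 2 * (FreeGroup.of 3) ^ 2}

/-- `Q = π₁(K # K)`, the presented group `⟨x₁, x₂, x₃, x₄ ∣ x₁²x₂²x₃²x₄²⟩`. -/
abbrev KleinSumGroup : Type := PresentedGroup kleinRels

/-- `G = Q × ℤ = π₁((K # K) × S¹)`. -/
abbrev KleinSumGroupZ : Type := KleinSumGroup × Multiplicative ℤ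

/-- The orientation character on `Q`, sending each generator `xᵢ` to `1 ∈ ℤ/2`. -/
noncomputable def w₀ : KleinSumGroup →* Multiplicative (ZMod 2) :=
  PresentedGroup.toGroup (f := fun _ => ofAdd (1 : ZMod 2)) (by
    intro r hr
    rw [kleinRels, Set.mem_singleton_iff] at hr
    subst hr
    simp only [map_mul, map_pow, FreeGroup.lift_apply_of]
    decide)

/-- The orientation character `w : G → ℤ/2` of `M³ = (K # K) × S¹`: it takes value `1` on each
`(xᵢ, 0)` and value `0` on the `ℤ` factor. -/
noncomputable def wChar : KleinSumGroupZ →* Multiplicative (ZMod 2) :=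
  w₀.comp (MonoidHom.fst _ _)

/-! ### Auxiliary: a finite quotient of `Q` inside `S₆` detecting the obstruction. -/

/-- Image of `x₁`: the transposition `(0 1)`. -/
def aP : Equiv.Perm (Fin 6) := Equiv.swap 0 1

/-- Image of `x₃`: the 6-cycle `(0 1 2 3 4 5)`. -/
def cP : Equiv.Perm (Fin 6) := finRotate 6

/-- Image of `x₄`: the 6-cycle `(0 1 4 5 2 3)`, whose square is `cP⁻²`. -/
def dP : Equiv.Perm (Fin 6) :=
  ⟨![1,4,3,0,5,2], ![3,0,5,2,1,4], by intro x; fin_cases x <;> rfl,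
    by intro x; fin_cases x <;> rfl⟩

/-- The assignment of generators of `Q` to permutations. -/
def fP : Fin 4 → Equiv.Perm (Fin 6) := ![aP, aP, cP, dP]

/-- The representation `φ : Q →* S₆`. -/
noncomputable def φP : KleinSumGroup →* Equiv.Perm (Fin 6) :=
  PresentedGroup.toGroup (f := fP) (by
    intro r hr
    rw [kleinRels, Set.mem_singleton_iff] at hr
    subst hr
    simp only [map_mul, map_pow, FreeGroup.lift_apply_of]
    decide)

/-- `ℤˣ → ℤ/2` as (multiplicative) groups. -/
def u2 : ℤˣ →* Multiplicative (ZMod 2) where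
  toFun u := if u = 1 then 1 else ofAdd 1
  map_one' := rfl
  map_mul' := by decide

set_option maxRecDepth 10000 in
/-- The computational heart: in `S₆`, any element commuting with both `aP` and `cP` is even,
and no element conjugates `aP` to `cP`. -/
theorem keyLemma : ∀ h : Equiv.Perm (Fin 6),
    ((h⁻¹ * aP * h = aP ∧ h⁻¹ * cP * h = cP) → Equiv.Perm.sign h = 1) ∧
    ¬ (h⁻¹ * aP * h = cP) := by decide

/-- `w₀` factors as the sign of `φP`. -/
theorem w₀_eq (x : KleinSumGroup) : w₀ x = u2 (Equiv.Perm.sign (φP x)) := by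
  have := PresentedGroup.toGroup.unique
    (f := fun _ : Fin 4 => ofAdd (1 : ZMod 2))
    (rels := kleinRels)
    (by
      intro r hr
      rw [kleinRels, Set.mem_singleton_iff] at hr
      subst hr
      simp only [map_mul, map_pow, FreeGroup.lift_apply_of]
      decide)
    (u2.comp ((Equiv.Perm.sign).comp φP))
    (by
      intro i
      simp only [MonoidHom.comp_apply, φP, PresentedGroup.toGroup.of]
      fin_cases i <;> decide)
    (x := x)
  exact this.symm

theorem no_orientation_reversing_conjugator
    (α β : KleinSumGroupZ)
    (hα : α = (PresentedGroup.of 0, 1))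
    (hβ : β = (PresentedGroup.of 2, 1))
    -- `wChar` is indeed determined as in the statement:
    (hw : ∀ i : Fin 4, wChar (PresentedGroup.of i, 1) = ofAdd (1 : ZMod 2))
    (hw' : ∀ n : Multiplicative ℤ, wChar (1, n) = 1) :
    ¬ ∃ lam : KleinSumGroupZ, wChar lam ≠ 1 ∧
      ((lam⁻¹ * α * lam = α ∧ lam⁻¹ * β * lam = β) ∨
        (lam⁻¹ * α * lam = β ∧ lam⁻¹ * β * lam = α)) := by
  subst hα hβ
  rintro ⟨lam, hne, hcase⟩
  -- first-component consequences
  have hW : w₀ lam.1 ≠ 1 := hne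
  have hsign : Equiv.Perm.sign (φP lam.1) = -1 := by
    rw [w₀_eq] at hW
    revert hW
    generalize Equiv.Perm.sign (φP lam.1) = u
    revert u
    decide
  set h : Equiv.Perm (Fin 6) := φP lam.1 with hh
  have push : ∀ y : KleinSumGroup, ∀ z : KleinSumGroup,
      lam⁻¹ * (y, (1 : Multiplicative ℤ)) * lam = (z, 1) →
      h⁻¹ * φP y * h = φP z := by
    intro y z hyz
    have h1 : lam.1⁻¹ * y * lam.1 = z := congrArg Prod.fst hyz
    have := congrArg φP h1
    simpa [map_mul, map_inv] using this
  have ha : φP (PresentedGroup.of 0) = aP := by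
    simp [φP, PresentedGroup.toGroup.of, fP]
  have hc : φP (PresentedGroup.of 2) = cP := by
    simp [φP, PresentedGroup.toGroup.of, fP]
  rcases hcase with ⟨h1, h2⟩ | ⟨h1, _⟩
  · have e1 := push _ _ h1
    have e2 := push _ _ h2
    rw [ha] at e1
    rw [hc] at e2
    have := (keyLemma h).1 ⟨e1, e2⟩
    rw [this] at hsign
    exact absurd hsign (by decide)
  · have e1 := push _ _ h1
    rw [ha, hc] at e1
    exact (keyLemma h).2 e1
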